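/- Let f* be an optimal randomized prediction rule for the ERMI-constrained fair classification problem: f* satisfies ρ_E(Ŷ, S) ≤ ε and its risk E[1{Ŷ ≠ Y}] is minimal among all randomized prediction rules Q_{Ŷ|X,S} satisfying ρ_E(Ŷ, S) ≤ ε. Suppose Y = h(X, S) for a deterministic function h : 𝒳 × 𝒮 → 𝒴, and s_max ∈ 𝒮 satisfies P_S(s_max) = 1/2 + δ for some δ > 0. Define u(ε) = max{ε, √ε}. Then for the prediction variable Ŷ induced by f*: E_{s∼P_S}[ TV(P_{Ŷ|S=s}, P_{Y|S=s_max}) ] ≤ (1/2 + 1/(4δ)) · u(ε). -/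

import Mathlib

open Finset

noncomputable section

variable {𝒳 𝒴 𝒮 : Type*} [Fintype 𝒳] [Fintype 𝒴] [Fintype 𝒮] [DecidableEq 𝒴]

/-- Total variation distance between two finitely supported distributions on `𝒴`,
`TV(p, q) = (1/2) ∑ y, |p y - q y|`. -/
def TV (p q : 𝒴 → ℝ) : ℝ := (1 / 2) * ∑ y, |p y - q y|

/-- Marginal distribution of the sensitive attribute `S` under the joint `P` of `(X, Y, S)`. -/
def margS (P : 𝒳 → 𝒴 → 𝒮 → ℝ) (s : 𝒮) : ℝ := ∑ x, ∑ y, P x y s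

/-- Conditional distribution of the label `Y` given `S = s`. -/
def condYS (P : 𝒳 → 𝒴 → 𝒮 → ℝ) (s : 𝒮) (y : 𝒴) : ℝ := (∑ x, P x y s) / margS P s

/-- A randomized prediction rule `Q`: for every `(x, s)`, `Q x s` is a probability
distribution on labels. -/
def IsRule (Q : 𝒳 → 𝒮 → 𝒴 → ℝ) : Prop :=
  (∀ x s y, 0 ≤ Q x s y) ∧ ∀ x s, ∑ y, Q x s y = 1

/-- The risk `E[1{Ŷ ≠ Y}]` of the rule `Q` under the joint distribution induced by `P` and
`Q` (in which `Ŷ` is conditionally independent of `Y` given `(X, S)`). -/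
def risk (P : 𝒳 → 𝒴 → 𝒮 → ℝ) (Q : 𝒳 → 𝒮 → 𝒴 → ℝ) : ℝ :=
  ∑ x, ∑ y, ∑ s, ∑ yh, P x y s * Q x s yh * (if yh = y then (0 : ℝ) else 1)

/-- Joint distribution of `(Ŷ, S)` induced by `P` and the rule `Q`. -/
def jointYhatS (P : 𝒳 → 𝒴 → 𝒮 → ℝ) (Q : 𝒳 → 𝒮 → 𝒴 → ℝ) (yh : 𝒴) (s : 𝒮) : ℝ :=
  ∑ x, ∑ y, P x y s * Q x s yh

/-- Marginal distribution of the prediction `Ŷ`. -/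
def margYhat (P : 𝒳 → 𝒴 → 𝒮 → ℝ) (Q : 𝒳 → 𝒮 → 𝒴 → ℝ) (yh : 𝒴) : ℝ :=
  ∑ s, jointYhatS P Q yh s

/-- Conditional distribution of the prediction `Ŷ` given `S = s`. -/
def condYhatS (P : 𝒳 → 𝒴 → 𝒮 → ℝ) (Q : 𝒳 → 𝒮 → 𝒴 → ℝ) (s : 𝒮) (yh : 𝒴) : ℝ :=
  jointYhatS P Q yh s / margS P s

/-- Exponential Rényi mutual information (χ²-divergence between the joint distribution of
`(Ŷ, S)` and the product of its marginals), summed over pairs with positive product of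
marginals. -/
def ERMI (P : 𝒳 → 𝒴 → 𝒮 → ℝ) (Q : 𝒳 → 𝒮 → 𝒴 → ℝ) : ℝ :=
  ∑ yh, ∑ s,
    if 0 < margYhat P Q yh * margS P s then
      (jointYhatS P Q yh s - margYhat P Q yh * margS P s) ^ 2 /
        (margYhat P Q yh * margS P s)
    else 0

/-! ### Auxiliary lemmas -/

section Aux

lemma sum_comm3 {α β γ : Type*} [Fintype α] [Fintype β] [Fintype γ] (f : α → β → γ → ℝ) :
    ∑ a, ∑ b, ∑ c, f a b c = ∑ c, ∑ b, ∑ a, f a b c :=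
  calc ∑ a, ∑ b, ∑ c, f a b c = ∑ b, ∑ a, ∑ c, f a b c := Finset.sum_comm
    _ = ∑ b, ∑ c, ∑ a, f a b c := Finset.sum_congr rfl fun _ _ => Finset.sum_comm
    _ = ∑ c, ∑ b, ∑ a, f a b c := Finset.sum_comm

lemma TV_nonneg (p q : 𝒴 → ℝ) : 0 ≤ TV p q :=
  mul_nonneg (by norm_num) (Finset.sum_nonneg fun y _ => abs_nonneg _)

lemma TV_self (p : 𝒴 → ℝ) : TV p p = 0 := by simp [TV]

lemma TV_symm (p q : 𝒴 → ℝ) : TV p q = TV q p := by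
  simp only [TV]
  rw [Finset.sum_congr rfl fun y _ => abs_sub_comm (p y) (q y)]

lemma TV_triangle (p q r : 𝒴 → ℝ) : TV p r ≤ TV p q + TV q r := by
  simp only [TV]
  rw [← mul_add, ← Finset.sum_add_distrib]
  exact mul_le_mul_of_nonneg_left
    (Finset.sum_le_sum fun y _ => abs_sub_le (p y) (q y) (r y)) (by norm_num)

lemma TV_scale (f g : 𝒴 → ℝ) {c : ℝ} (hc : 0 < c) :
    c * TV (fun y => f y / c) (fun y => g y / c) = (1 / 2) * ∑ y, |f y - g y| := by
  have key : ∀ y, |f y / c - g y / c| = |f y - g y| / c := fun y => by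
    rw [div_sub_div_same, abs_div, abs_of_pos hc]
  simp only [TV, key]
  rw [← Finset.sum_div]
  field_simp

/-- Coupling rule: given target distribution `q` and group label distribution `qs`,
`mix q qs y0` is a distribution on labels for a point whose true label is `y0`,
whose `qs`-average is `q` and which keeps mass `min (q y0) (qs y0)` on `y0`. -/
def mix (q qs : 𝒴 → ℝ) (y0 y : 𝒴) : ℝ :=
  if qs y0 = 0 then q y
  else min (q y0) (qs y0) / qs y0 * (if y = y0 then 1 else 0)
    + (qs y0 - min (q y0) (qs y0)) / qs y0 *
      ((q y - min (q y) (qs y)) / ∑ y', (q y' - min (q y') (qs y')))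

variable {q qs : 𝒴 → ℝ}

lemma mix_t_nonneg : 0 ≤ ∑ y', (q y' - min (q y') (qs y')) :=
  Finset.sum_nonneg fun y _ => by simp [sub_nonneg, min_le_left]

lemma mix_d_sum (hq1 : ∑ y, q y = 1) (hqs1 : ∑ y, qs y = 1) :
    ∑ y', (qs y' - min (q y') (qs y')) = ∑ y', (q y' - min (q y') (qs y')) := by
  rw [Finset.sum_sub_distrib, Finset.sum_sub_distrib, hq1, hqs1]

lemma mix_t_zero (hq0 : ∀ y, 0 ≤ q y) (hqs0 : ∀ y, 0 ≤ qs y)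
    (hq1 : ∑ y, q y = 1) (hqs1 : ∑ y, qs y = 1)
    (ht : ∑ y', (q y' - min (q y') (qs y')) = 0) : ∀ y, q y = qs y := by
  have he : ∀ y ∈ Finset.univ, q y - min (q y) (qs y) = 0 := by
    rw [← Finset.sum_eq_zero_iff_of_nonneg (fun y _ => by simp [sub_nonneg, min_le_left])]
    exact ht
  have hd : ∀ y ∈ Finset.univ, qs y - min (q y) (qs y) = 0 := by
    rw [← Finset.sum_eq_zero_iff_of_nonneg (fun y _ => by simp [sub_nonneg, min_le_right])]
    rw [mix_d_sum hq1 hqs1]; exact ht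
  intro y
  have h1 := he y (mem_univ y); have h2 := hd y (mem_univ y); linarith

lemma mix_nonneg (hq0 : ∀ y, 0 ≤ q y) (hqs0 : ∀ y, 0 ≤ qs y) (y0 y : 𝒴) :
    0 ≤ mix q qs y0 y := by
  rw [mix]
  by_cases h1 : qs y0 = 0
  · rw [if_pos h1]; exact hq0 y
  · rw [if_neg h1]
    have hqs0' : 0 ≤ qs y0 := hqs0 y0
    have := mix_t_nonneg (q := q) (qs := qs)
    have h2 : 0 ≤ min (q y0) (qs y0) := le_min (hq0 y0) (hqs0 y0)
    have h3 : 0 ≤ q y - min (q y) (qs y) := by simp [sub_nonneg, min_le_left]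
    have h4 : 0 ≤ qs y0 - min (q y0) (qs y0) := by simp [sub_nonneg, min_le_right]
    have h5 : (0:ℝ) ≤ if y = y0 then 1 else 0 := by split_ifs <;> norm_num
    exact add_nonneg (mul_nonneg (div_nonneg h2 hqs0') h5)
      (mul_nonneg (div_nonneg h4 hqs0') (div_nonneg h3 this))

lemma mix_sum (hq0 : ∀ y, 0 ≤ q y) (hqs0 : ∀ y, 0 ≤ qs y)
    (hq1 : ∑ y, q y = 1) (hqs1 : ∑ y, qs y = 1) (y0 : 𝒴) :
    ∑ y, mix q qs y0 y = 1 := by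
  unfold mix
  split_ifs with h1
  · exact hq1
  · set t := ∑ y', (q y' - min (q y') (qs y')) with ht
    rw [Finset.sum_add_distrib, ← Finset.mul_sum, ← Finset.mul_sum, ← Finset.sum_div]
    rw [Finset.sum_ite_eq' Finset.univ y0 (fun _ => (1:ℝ))]
    simp only [mem_univ, if_true]
    by_cases htz : t = 0
    · have hqq : ∀ y, q y = qs y := mix_t_zero hq0 hqs0 hq1 hqs1 (by rw [← ht]; exact htz)
      simp [hqq y0, sub_self, div_self h1]
    · rw [div_self htz]
      field_simp
      ring

lemma mix_mul (hq0 : ∀ y, 0 ≤ q y) (hqs0 : ∀ y, 0 ≤ qs y) (y0 y : 𝒴) :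
    qs y0 * mix q qs y0 y
      = min (q y0) (qs y0) * (if y = y0 then 1 else 0)
        + (qs y0 - min (q y0) (qs y0)) *
          ((q y - min (q y) (qs y)) / ∑ y', (q y' - min (q y') (qs y'))) := by
  rw [mix]
  by_cases h1 : qs y0 = 0
  · rw [if_pos h1]
    simp [h1, min_eq_right (hq0 y0)]
  · rw [if_neg h1]
    have e1 : qs y0 * (min (q y0) (qs y0) / qs y0) = min (q y0) (qs y0) := by field_simp
    have e2 : qs y0 * ((qs y0 - min (q y0) (qs y0)) / qs y0)
        = qs y0 - min (q y0) (qs y0) := by field_simp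
    rw [mul_add, ← mul_assoc, ← mul_assoc, e1, e2]

lemma mix_marg (hq0 : ∀ y, 0 ≤ q y) (hqs0 : ∀ y, 0 ≤ qs y)
    (hq1 : ∑ y, q y = 1) (hqs1 : ∑ y, qs y = 1) (y : 𝒴) :
    ∑ y0, qs y0 * mix q qs y0 y = q y := by
  rw [Finset.sum_congr rfl (fun y0 _ => mix_mul hq0 hqs0 y0 y)]
  rw [Finset.sum_add_distrib, ← Finset.sum_mul, mix_d_sum hq1 hqs1]
  simp only [mul_ite, mul_one, mul_zero]
  rw [Finset.sum_ite_eq]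
  simp only [mem_univ, if_true]
  set t := ∑ y', (q y' - min (q y') (qs y')) with ht
  by_cases htz : t = 0
  · have hqq : ∀ y, q y = qs y := mix_t_zero hq0 hqs0 hq1 hqs1 (by rw [← ht]; exact htz)
    rw [htz]
    simp [hqq y, min_self]
  · rw [mul_comm, div_mul_cancel₀ _ htz]
    ring

lemma mix_diag_ge (hq0 : ∀ y, 0 ≤ q y) (hqs0 : ∀ y, 0 ≤ qs y) (y0 : 𝒴) :
    min (q y0) (qs y0) ≤ qs y0 * mix q qs y0 y0 := by
  rw [mix_mul hq0 hqs0, if_pos rfl, mul_one]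
  have h3 : 0 ≤ q y0 - min (q y0) (qs y0) := by simp [sub_nonneg, min_le_left]
  have h4 : 0 ≤ qs y0 - min (q y0) (qs y0) := by simp [sub_nonneg, min_le_right]
  have := mul_nonneg h4 (div_nonneg h3 (mix_t_nonneg (q := q) (qs := qs)))
  linarith

lemma sum_abs_eq_one_sub_min (hq1 : ∑ y, q y = 1) (hqs1 : ∑ y, qs y = 1) :
    (1/2 : ℝ) * ∑ y, |q y - qs y| = 1 - ∑ y, min (q y) (qs y) := by
  have key : ∀ y, |q y - qs y| = q y + qs y - 2 * min (q y) (qs y) := by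
    intro y
    rcases le_total (q y) (qs y) with hle | hle
    · rw [abs_of_nonpos (by linarith), min_eq_left hle]; ring
    · rw [abs_of_nonneg (by linarith), min_eq_right hle]; ring
  rw [Finset.sum_congr rfl fun y _ => key y, Finset.sum_sub_distrib,
    Finset.sum_add_distrib, hq1, hqs1, ← Finset.mul_sum]
  ring

/-- Rewriting the risk. -/
lemma risk_eq (P : 𝒳 → 𝒴 → 𝒮 → ℝ) (R : 𝒳 → 𝒮 → 𝒴 → ℝ)
    (hR1 : ∀ x s, ∑ y, R x s y = 1) :
    risk P R = ∑ s, ∑ y, ((∑ x, P x y s) - ∑ x, P x y s * R x s y) := by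
  have step : ∀ x y s, ∑ yh, P x y s * R x s yh * (if yh = y then (0:ℝ) else 1)
      = P x y s - P x y s * R x s y := by
    intro x y s
    have key : ∀ yh, P x y s * R x s yh * (if yh = y then (0:ℝ) else 1)
        = P x y s * R x s yh - (if yh = y then P x y s * R x s yh else 0) := by
      intro yh; split_ifs <;> ring
    rw [Finset.sum_congr rfl fun yh _ => key yh, Finset.sum_sub_distrib,
      ← Finset.mul_sum, hR1 x s, mul_one,
      Finset.sum_ite_eq' Finset.univ y (fun yh => P x y s * R x s yh)]
    simp
  rw [risk]
  rw [Finset.sum_congr rfl fun x _ => Finset.sum_congr rfl fun y _ =>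
    Finset.sum_congr rfl fun s _ => step x y s]
  rw [sum_comm3 (fun x y s => P x y s - P x y s * R x s y)]
  exact Finset.sum_congr rfl fun s _ => Finset.sum_congr rfl fun y _ =>
    Finset.sum_sub_distrib _ _

end Aux

/-- **Theorem 2 (ERMI case).** If `Y = h(X, S)` is deterministic, `P_S(s_max) = 1/2 + δ`
with `δ > 0`, `u(ε) = max{ε, √ε}`, and `Q` is an optimal randomized prediction rule among
those with `ρ_E(Ŷ, S) ≤ ε`, then
`E_{s∼P_S}[TV(P_{Ŷ|S=s}, P_{Y|S=s_max})] ≤ (1/2 + 1/(4δ)) u(ε)`. -/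
theorem ermi_fair_optimal_inductive_bias
    (P : 𝒳 → 𝒴 → 𝒮 → ℝ)
    (hP0 : ∀ x y s, 0 ≤ P x y s)
    (hP1 : ∑ x, ∑ y, ∑ s, P x y s = 1)
    (hS : ∀ s, 0 < margS P s)
    (h : 𝒳 → 𝒮 → 𝒴) (hdet : ∀ x y s, y ≠ h x s → P x y s = 0)
    (smax : 𝒮) (δ : ℝ) (hδ : 0 < δ) (hsmax : margS P smax = 1 / 2 + δ)
    (ε : ℝ)
    (Q : 𝒳 → 𝒮 → 𝒴 → ℝ) (hQ : IsRule Q)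
    (hfair : ERMI P Q ≤ ε)
    (hopt : ∀ Q' : 𝒳 → 𝒮 → 𝒴 → ℝ, IsRule Q' → ERMI P Q' ≤ ε → risk P Q ≤ risk P Q') :
    ∑ s, margS P s * TV (condYhatS P Q s) (condYS P smax)
      ≤ (1 / 2 + 1 / (4 * δ)) * max ε (Real.sqrt ε) := by
  classical
  obtain ⟨hQ0, hQ1⟩ := hQ
  -- basic facts
  have hsum_s : ∑ s, margS P s = 1 := by
    simp only [margS]
    rw [← hP1, sum_comm3 (fun x y s => P x y s)]
    exact Finset.sum_congr rfl fun s _ => Finset.sum_comm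
  have hMsum : ∀ s, ∑ y, ∑ x, P x y s = margS P s := fun s => Finset.sum_comm
  have hMcond : ∀ s y, ∑ x, P x y s = margS P s * condYS P s y := by
    intro s y
    rw [condYS, mul_comm, div_mul_cancel₀ _ (hS s).ne']
  have hJ0 : ∀ yh s, 0 ≤ jointYhatS P Q yh s := fun yh s =>
    Finset.sum_nonneg fun x _ => Finset.sum_nonneg fun y _ =>
      mul_nonneg (hP0 x y s) (hQ0 x s yh)
  have hJsum : ∀ s, ∑ yh, jointYhatS P Q yh s = margS P s := by
    intro s
    simp only [jointYhatS, margS]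
    rw [Finset.sum_comm]
    refine Finset.sum_congr rfl fun x _ => ?_
    rw [Finset.sum_comm]
    refine Finset.sum_congr rfl fun y _ => ?_
    rw [← Finset.mul_sum, hQ1 x s, mul_one]
  have hm0 : ∀ yh, 0 ≤ margYhat P Q yh := fun yh =>
    Finset.sum_nonneg fun s _ => hJ0 yh s
  have hmsum : ∑ yh, margYhat P Q yh = 1 := by
    simp only [margYhat]
    rw [Finset.sum_comm]
    rw [Finset.sum_congr rfl fun s _ => hJsum s]
    exact hsum_s
  have hε0 : 0 ≤ ε := by
    refine le_trans ?_ hfair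
    refine Finset.sum_nonneg fun yh _ => Finset.sum_nonneg fun s _ => ?_
    split_ifs with hc
    · exact div_nonneg (sq_nonneg _) hc.le
    · exact le_refl 0
  -- conditional label distributions are distributions
  have hq0c : ∀ s y, 0 ≤ condYS P s y := fun s y =>
    div_nonneg (Finset.sum_nonneg fun x _ => hP0 x y s) (hS s).le
  have hq1c : ∀ s, ∑ y, condYS P s y = 1 := by
    intro s
    simp only [condYS]
    rw [← Finset.sum_div, hMsum s, div_self (hS s).ne']
  -- TV rescalings
  have hTVq : ∀ s, margS P s * TV (condYhatS P Q s) (condYS P s)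
      = (1/2) * ∑ y, |jointYhatS P Q y s - ∑ x, P x y s| := by
    intro s
    have h1 : condYhatS P Q s = fun y => jointYhatS P Q y s / margS P s := rfl
    have h2 : condYS P s = fun y => (∑ x, P x y s) / margS P s := rfl
    rw [h1, h2, TV_scale _ _ (hS s)]
  have hTVm : ∀ s, margS P s * TV (condYhatS P Q s) (margYhat P Q)
      = (1/2) * ∑ yh, |jointYhatS P Q yh s - margYhat P Q yh * margS P s| := by
    intro s
    have e2 : margYhat P Q = fun yh => (margYhat P Q yh * margS P s) / margS P s := by
      funext yh; rw [mul_div_cancel_right₀ _ (hS s).ne']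
    calc margS P s * TV (condYhatS P Q s) (margYhat P Q)
        = margS P s * TV (fun yh => jointYhatS P Q yh s / margS P s)
            (fun yh => (margYhat P Q yh * margS P s) / margS P s) := by
          rw [← e2]; rfl
      _ = (1/2) * ∑ yh, |jointYhatS P Q yh s - margYhat P Q yh * margS P s| :=
          TV_scale _ _ (hS s)
  -- Step 1 (fairness): ∑_s p_s TV(r_s, m̄) ≤ √ε / 2
  have habs : ∑ yh, ∑ s, |jointYhatS P Q yh s - margYhat P Q yh * margS P s|
      ≤ Real.sqrt ε := by
    have hzero : ∀ yh s, ¬ 0 < margYhat P Q yh * margS P s →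
        jointYhatS P Q yh s - margYhat P Q yh * margS P s = 0 := by
      intro yh s hc
      have hm : margYhat P Q yh = 0 := by
        have h1 : margYhat P Q yh * margS P s ≤ 0 := not_lt.mp hc
        have h2 : margYhat P Q yh ≤ 0 := by
          by_contra hcon
          push_neg at hcon
          exact absurd (mul_pos hcon (hS s)) hc
        exact le_antisymm h2 (hm0 yh)
      have hJle : jointYhatS P Q yh s ≤ margYhat P Q yh :=
        Finset.single_le_sum (f := fun s' => jointYhatS P Q yh s')
          (fun i _ => hJ0 yh i) (mem_univ s)
      have : jointYhatS P Q yh s = 0 := le_antisymm (hm ▸ hJle) (hJ0 yh s)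
      rw [this, hm, zero_mul, sub_zero]
    set f : 𝒴 × 𝒮 → ℝ := fun p =>
      if 0 < margYhat P Q p.1 * margS P p.2 then
        |jointYhatS P Q p.1 p.2 - margYhat P Q p.1 * margS P p.2| /
          Real.sqrt (margYhat P Q p.1 * margS P p.2)
      else 0 with hf
    set g : 𝒴 × 𝒮 → ℝ := fun p =>
      if 0 < margYhat P Q p.1 * margS P p.2 then
        Real.sqrt (margYhat P Q p.1 * margS P p.2)
      else 0 with hg
    have hfg : ∀ p : 𝒴 × 𝒮, f p * g p
        = |jointYhatS P Q p.1 p.2 - margYhat P Q p.1 * margS P p.2| := by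
      intro p
      rw [hf, hg]
      dsimp only
      split_ifs with hc
      · rw [div_mul_cancel₀ _ (Real.sqrt_ne_zero'.mpr hc)]
      · rw [hzero p.1 p.2 hc, abs_zero, mul_zero]
    have hf2 : ∑ p : 𝒴 × 𝒮, f p ^ 2 = ERMI P Q := by
      rw [ERMI, Fintype.sum_prod_type]
      refine Finset.sum_congr rfl fun yh _ => Finset.sum_congr rfl fun s _ => ?_
      rw [hf]
      dsimp only
      split_ifs with hc
      · rw [div_pow, sq_abs, Real.sq_sqrt hc.le]
      · exact zero_pow (by norm_num)
    have hg2 : ∑ p : 𝒴 × 𝒮, g p ^ 2 ≤ 1 := by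
      have hle : ∀ p : 𝒴 × 𝒮, g p ^ 2 ≤ margYhat P Q p.1 * margS P p.2 := by
        intro p
        rw [hg]
        dsimp only
        split_ifs with hc
        · rw [Real.sq_sqrt hc.le]
        · simpa using mul_nonneg (hm0 p.1) (hS p.2).le
      calc ∑ p : 𝒴 × 𝒮, g p ^ 2 ≤ ∑ p : 𝒴 × 𝒮, margYhat P Q p.1 * margS P p.2 :=
            Finset.sum_le_sum fun p _ => hle p
        _ = ∑ yh, ∑ s, margYhat P Q yh * margS P s := Fintype.sum_prod_type _
        _ = 1 := by
            have key : ∀ yh : 𝒴, ∑ s, margYhat P Q yh * margS P s = margYhat P Q yh := by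
              intro yh; rw [← Finset.mul_sum, hsum_s, mul_one]
            rw [Finset.sum_congr rfl fun yh _ => key yh, hmsum]
    calc ∑ yh, ∑ s, |jointYhatS P Q yh s - margYhat P Q yh * margS P s|
        = ∑ p : 𝒴 × 𝒮, f p * g p := by
          rw [Fintype.sum_prod_type]
          exact Finset.sum_congr rfl fun yh _ => Finset.sum_congr rfl fun s _ =>
            (hfg (yh, s)).symm
      _ ≤ Real.sqrt (∑ p : 𝒴 × 𝒮, f p ^ 2) * Real.sqrt (∑ p : 𝒴 × 𝒮, g p ^ 2) :=
          Real.sum_mul_le_sqrt_mul_sqrt _ _ _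
      _ ≤ Real.sqrt ε * Real.sqrt 1 := by
          have h1 : ∑ p : 𝒴 × 𝒮, f p ^ 2 ≤ ε := by rw [hf2]; exact hfair
          exact mul_le_mul (Real.sqrt_le_sqrt h1) (Real.sqrt_le_sqrt hg2)
            (Real.sqrt_nonneg _) (Real.sqrt_nonneg _)
      _ = Real.sqrt ε := by rw [Real.sqrt_one, mul_one]
  have hA : ∑ s, margS P s * TV (condYhatS P Q s) (margYhat P Q) ≤ Real.sqrt ε / 2 := by
    rw [Finset.sum_congr rfl fun s _ => hTVm s, ← Finset.mul_sum, Finset.sum_comm]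
    linarith [habs]
  -- Step 2: risk lower bound
  have hlow : ∑ s, margS P s * TV (condYhatS P Q s) (condYS P s) ≤ risk P Q := by
    rw [risk_eq P Q hQ1, Finset.sum_congr rfl fun s _ => hTVq s]
    refine Finset.sum_le_sum fun s _ => ?_
    have habs_eq : ∀ y, |jointYhatS P Q y s - ∑ x, P x y s|
        = (jointYhatS P Q y s - ∑ x, P x y s)
          + 2 * max ((∑ x, P x y s) - jointYhatS P Q y s) 0 := by
      intro y
      rcases le_total (jointYhatS P Q y s) (∑ x, P x y s) with hc | hc
      · rw [abs_of_nonpos (by linarith), max_eq_left (by linarith)]; ring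
      · rw [abs_of_nonneg (by linarith), max_eq_right (by linarith)]; ring
    rw [Finset.sum_congr rfl fun y _ => habs_eq y, Finset.sum_add_distrib,
      Finset.sum_sub_distrib, hJsum s, hMsum s, sub_self, zero_add, ← Finset.mul_sum]
    have hterm : ∀ y, max ((∑ x, P x y s) - jointYhatS P Q y s) 0
        ≤ (∑ x, P x y s) - ∑ x, P x y s * Q x s y := by
      intro y
      have hJge : ∑ x, P x y s * Q x s y ≤ jointYhatS P Q y s := by
        refine Finset.sum_le_sum fun x _ => ?_
        exact Finset.single_le_sum (f := fun y' => P x y' s * Q x s y)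
          (fun i _ => mul_nonneg (hP0 x i s) (hQ0 x s y)) (mem_univ y)
      have hPQle : ∑ x, P x y s * Q x s y ≤ ∑ x, P x y s := by
        refine Finset.sum_le_sum fun x _ => ?_
        have hq_le1 : Q x s y ≤ 1 := by
          calc Q x s y ≤ ∑ y', Q x s y' :=
                Finset.single_le_sum (fun i _ => hQ0 x s i) (mem_univ y)
            _ = 1 := hQ1 x s
        nlinarith [hP0 x y s]
      exact max_le (by linarith) (by linarith)
    calc (1/2 : ℝ) * (2 * ∑ y, max ((∑ x, P x y s) - jointYhatS P Q y s) 0)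
        = ∑ y, max ((∑ x, P x y s) - jointYhatS P Q y s) 0 := by ring
      _ ≤ ∑ y, ((∑ x, P x y s) - ∑ x, P x y s * Q x s y) :=
          Finset.sum_le_sum fun y _ => hterm y
  -- Step 3: comparator rule
  set R : 𝒳 → 𝒮 → 𝒴 → ℝ := fun x s y => mix (condYS P smax) (condYS P s) (h x s) y
    with hRdef
  have hR0 : ∀ x s y, 0 ≤ R x s y := fun x s y =>
    mix_nonneg (hq0c smax) (hq0c s) (h x s) y
  have hR1 : ∀ x s, ∑ y, R x s y = 1 := fun x s =>
    mix_sum (hq0c smax) (hq0c s) (hq1c smax) (hq1c s) (h x s)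
  have hPsingle : ∀ x s, ∑ y, P x y s = P x (h x s) s := fun x s =>
    Finset.sum_eq_single (h x s) (fun y _ hy => hdet x y s hy)
      (fun hmem => absurd (mem_univ _) hmem)
  have hPexpand : ∀ x s (C : 𝒴 → ℝ),
      P x (h x s) s * C (h x s) = ∑ y0, P x y0 s * C y0 := by
    intro x s C
    rw [Finset.sum_eq_single (h x s)
      (fun y0 _ hy => by rw [hdet x y0 s hy, zero_mul])
      (fun hmem => absurd (mem_univ _) hmem)]
  have hjointR : ∀ yh s, jointYhatS P R yh s = margS P s * condYS P smax yh := by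
    intro yh s
    simp only [jointYhatS]
    calc ∑ x, ∑ y, P x y s * R x s yh
        = ∑ x, (∑ y, P x y s) * R x s yh := by
          exact Finset.sum_congr rfl fun x _ => (Finset.sum_mul _ _ _).symm
      _ = ∑ x, ∑ y0, P x y0 s * mix (condYS P smax) (condYS P s) y0 yh := by
          refine Finset.sum_congr rfl fun x _ => ?_
          rw [hPsingle x s]
          exact hPexpand x s (fun y0 => mix (condYS P smax) (condYS P s) y0 yh)
      _ = ∑ y0, ∑ x, P x y0 s * mix (condYS P smax) (condYS P s) y0 yh :=
          Finset.sum_comm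
      _ = ∑ y0, (∑ x, P x y0 s) * mix (condYS P smax) (condYS P s) y0 yh :=
          Finset.sum_congr rfl fun y0 _ => (Finset.sum_mul _ _ _).symm
      _ = ∑ y0, margS P s * (condYS P s y0 * mix (condYS P smax) (condYS P s) y0 yh) := by
          refine Finset.sum_congr rfl fun y0 _ => ?_
          rw [hMcond s y0, mul_assoc]
      _ = margS P s * condYS P smax yh := by
          rw [← Finset.mul_sum,
            mix_marg (hq0c smax) (hq0c s) (hq1c smax) (hq1c s) yh]
  have hmargR : ∀ yh, margYhat P R yh = condYS P smax yh := by
    intro yh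
    rw [margYhat, Finset.sum_congr rfl fun s _ => hjointR yh s, ← Finset.sum_mul,
      hsum_s, one_mul]
  have hermiR : ERMI P R = 0 := by
    rw [ERMI]
    refine Finset.sum_eq_zero fun yh _ => Finset.sum_eq_zero fun s _ => ?_
    have : jointYhatS P R yh s - margYhat P R yh * margS P s = 0 := by
      rw [hjointR yh s, hmargR yh]; ring
    rw [this]
    split_ifs <;> simp
  have hriskR : risk P R ≤ ∑ s, margS P s * TV (condYS P smax) (condYS P s) := by
    rw [risk_eq P R hR1]
    refine Finset.sum_le_sum fun s _ => ?_
    have hacc : margS P s * ∑ y, min (condYS P smax y) (condYS P s y)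
        ≤ ∑ y, ∑ x, P x y s * R x s y := by
      have key : ∀ y, ∑ x, P x y s * R x s y
          = (∑ x, P x y s) * mix (condYS P smax) (condYS P s) y y := by
        intro y
        rw [Finset.sum_mul]
        refine Finset.sum_congr rfl fun x _ => ?_
        by_cases hP : P x y s = 0
        · rw [hP, zero_mul, zero_mul]
        · have hy : y = h x s := by
            by_contra hy
            exact hP (hdet x y s hy)
          rw [hRdef]
          dsimp only
          rw [← hy]
      rw [Finset.sum_congr rfl fun y _ => key y, Finset.mul_sum]
      refine Finset.sum_le_sum fun y _ => ?_
      rw [hMcond s y, mul_assoc]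
      exact mul_le_mul_of_nonneg_left
        (mix_diag_ge (hq0c smax) (hq0c s) y) (hS s).le
    have hTVmin : margS P s * TV (condYS P smax) (condYS P s)
        = margS P s * (1 - ∑ y, min (condYS P smax y) (condYS P s y)) := by
      rw [TV, sum_abs_eq_one_sub_min (hq1c smax) (hq1c s)]
    rw [Finset.sum_sub_distrib, hMsum s, hTVmin, mul_sub, mul_one]
    linarith [hacc]
  have hcmp : risk P Q ≤ risk P R := hopt R ⟨hR0, hR1⟩ (by rw [hermiR]; exact hε0)
  -- Step 4: the 2δ gap
  set T := TV (margYhat P Q) (condYS P smax) with hT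
  have hper : ∀ s, TV (condYS P smax) (condYS P s)
      - TV (condYhatS P Q s) (margYhat P Q) + (if s = smax then T else -T)
      ≤ TV (condYhatS P Q s) (condYS P s) := by
    intro s
    by_cases hcase : s = smax
    · subst hcase
      rw [if_pos rfl, TV_self]
      have t1 := TV_triangle (margYhat P Q) (condYhatS P Q s) (condYS P s)
      have t2 := TV_symm (margYhat P Q) (condYhatS P Q s)
      rw [hT]
      linarith
    · rw [if_neg hcase]
      have t1 := TV_triangle (condYS P smax) (margYhat P Q) (condYhatS P Q s)
      have t2 := TV_triangle (condYS P smax) (condYhatS P Q s) (condYS P s)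
      have t3 := TV_symm (condYS P smax) (margYhat P Q)
      have t4 := TV_symm (margYhat P Q) (condYhatS P Q s)
      rw [hT]
      linarith
  have hsum_per : ∑ s, margS P s * (TV (condYS P smax) (condYS P s)
      - TV (condYhatS P Q s) (margYhat P Q) + (if s = smax then T else -T))
      ≤ ∑ s, margS P s * TV (condYS P smax) (condYS P s) := by
    calc ∑ s, margS P s * (TV (condYS P smax) (condYS P s)
        - TV (condYhatS P Q s) (margYhat P Q) + (if s = smax then T else -T))
        ≤ ∑ s, margS P s * TV (condYhatS P Q s) (condYS P s) :=
          Finset.sum_le_sum fun s _ =>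
            mul_le_mul_of_nonneg_left (hper s) (hS s).le
      _ ≤ risk P Q := hlow
      _ ≤ risk P R := hcmp
      _ ≤ ∑ s, margS P s * TV (condYS P smax) (condYS P s) := hriskR
  have hexp : ∑ s, margS P s * (TV (condYS P smax) (condYS P s)
      - TV (condYhatS P Q s) (margYhat P Q) + (if s = smax then T else -T))
      = (∑ s, margS P s * TV (condYS P smax) (condYS P s))
        - (∑ s, margS P s * TV (condYhatS P Q s) (margYhat P Q))
        + (2 * T * margS P smax - T) := by
    have key : ∀ s, margS P s * (TV (condYS P smax) (condYS P s)
        - TV (condYhatS P Q s) (margYhat P Q) + (if s = smax then T else -T))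
        = margS P s * TV (condYS P smax) (condYS P s)
          - margS P s * TV (condYhatS P Q s) (margYhat P Q)
          + (2 * T * (if s = smax then margS P s else 0) - T * margS P s) := by
      intro s; split_ifs <;> ring
    rw [Finset.sum_congr rfl fun s _ => key s, Finset.sum_add_distrib,
      Finset.sum_sub_distrib, Finset.sum_sub_distrib, ← Finset.mul_sum,
      ← Finset.mul_sum, Finset.sum_ite_eq' Finset.univ smax (fun s => margS P s),
      hsum_s]
    simp [mem_univ]
  have h2δ : 2 * δ * T ≤ Real.sqrt ε / 2 := by
    rw [hexp] at hsum_per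
    rw [hsmax] at hsum_per
    nlinarith [hA]
  have hTbound : T ≤ Real.sqrt ε / (4 * δ) := by
    rw [le_div_iff₀ (by positivity : (0:ℝ) < 4 * δ)]
    nlinarith
  -- Final assembly
  calc ∑ s, margS P s * TV (condYhatS P Q s) (condYS P smax)
      ≤ ∑ s, margS P s * (TV (condYhatS P Q s) (margYhat P Q) + T) := by
        refine Finset.sum_le_sum fun s _ => ?_
        refine mul_le_mul_of_nonneg_left ?_ (hS s).le
        rw [hT]
        exact TV_triangle _ _ _
    _ = (∑ s, margS P s * TV (condYhatS P Q s) (margYhat P Q)) + T := by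
        rw [Finset.sum_congr rfl fun s _ => mul_add (margS P s) _ T,
          Finset.sum_add_distrib, ← Finset.sum_mul, hsum_s, one_mul]
    _ ≤ Real.sqrt ε / 2 + Real.sqrt ε / (4 * δ) := add_le_add hA hTbound
    _ = (1 / 2 + 1 / (4 * δ)) * Real.sqrt ε := by field_simp
    _ ≤ (1 / 2 + 1 / (4 * δ)) * max ε (Real.sqrt ε) := by
        refine mul_le_mul_of_nonneg_left (le_max_right _ _) ?_
        positivity
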